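/- Let G be a Tanner graph with finite girth g in which every variable node has degree at least d ≥ 2 and every check node has degree k, let εk be an integer with 2 ≤ εk ≤ k, and set x = εk − 1 ≥ 1. Let p be a nonzero nonnegative real vector such that for every check node u and every variable node v_i ∈ N(u), (εk)·p_i ≤ Σ_{v_j ∈ N(u)} p_j (these inequalities hold for every pseudocodeword when the check nodes represent constraints of a [k,k′,εk] linear subcode). If g ≡ 2 (mod 4), then both w_BSC(p) and w_AWGN(p) are at least 1 + Σ_{i=0}^{(g−6)/4} d(d−1)^i x^{i+1}. If g ≡ 0 (mod 4), then both w_BSC(p) and w_AWGN(p) are at least 1 + Σ_{i=0}^{(g−8)/4} d(d−1)^i x^{i+1} + (d−1)^{(g−4)/4} x^{g/4} (empty sums being 0). -/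

import Mathlib

/-- A Tanner graph with `n` variable nodes and `m` check nodes, given by the
neighborhood `N u` (the set of variable nodes adjacent to check node `u`). -/
structure TannerGraph (n m : ℕ) where
  N : Fin m → Finset (Fin n)

/-- The underlying bipartite simple graph of a Tanner graph, on vertex set
`Fin n ⊕ Fin m` (variable nodes on the left, check nodes on the right). -/
def TannerGraph.graph {n m : ℕ} (G : TannerGraph n m) : SimpleGraph (Fin n ⊕ Fin m) :=
  SimpleGraph.fromRel (fun a b =>
    match a, b with
    | Sum.inl i, Sum.inr j => i ∈ G.N j
    | _, _ => False)

/-- The degree of variable node `i` in the Tanner graph. -/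
def TannerGraph.varDeg {n m : ℕ} (G : TannerGraph n m) (i : Fin n) : ℕ :=
  (Finset.univ.filter (fun j : Fin m => i ∈ G.N j)).card

/-- AWGN pseudocodeword weight. -/
noncomputable def wAWGN {n : ℕ} (p : Fin n → ℝ) : ℝ :=
  (∑ i, p i) ^ 2 / (∑ i, (p i) ^ 2)

/-- The sum of the `e` largest components of `p` (for nonnegative `p`),
expressed as the largest sum over sets of `e` coordinates. -/
noncomputable def maxSum {n : ℕ} (p : Fin n → ℝ) (e : ℕ) : ℝ :=
  sSup ((fun S : Finset (Fin n) => ∑ i ∈ S, p i) '' {S | S.card = e})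

/-- The smallest number `e` such that the sum of the `e` largest components of `p`
is at least half of the total sum. -/
noncomputable def eBSC {n : ℕ} (p : Fin n → ℝ) : ℕ :=
  sInf {e : ℕ | (∑ i, p i) / 2 ≤ maxSum p e}

/-- BSC pseudocodeword weight. -/
noncomputable def wBSC {n : ℕ} (p : Fin n → ℝ) : ℝ :=
  if maxSum p (eBSC p) = (∑ i, p i) / 2 then 2 * (eBSC p : ℝ) else 2 * (eBSC p : ℝ) - 1


open SimpleGraph

variable {V : Type*} {H : SimpleGraph V}

/-- Build a walk from a function `c : ℕ → V` with adjacency along `0..L`. -/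
def funWalk (H : SimpleGraph V) : (L : ℕ) → (c : ℕ → V) →
    (∀ i < L, H.Adj (c i) (c (i+1))) → H.Walk (c 0) (c L)
  | 0, _, _ => Walk.nil
  | (L+1), c, h =>
      Walk.cons (h 0 (Nat.succ_pos L))
        (funWalk H L (fun i => c (i+1)) (fun i hi => h (i+1) (Nat.succ_lt_succ hi)))

lemma funWalk_support (L : ℕ) (c : ℕ → V) (h : ∀ i < L, H.Adj (c i) (c (i+1))) :
    (funWalk H L c h).support = (List.range (L+1)).map c := by
  induction L generalizing c with
  | zero => simp [funWalk, List.range_succ]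
  | succ L ih =>
      rw [funWalk, Walk.support_cons, ih]
      rw [List.range_succ_eq_map (n := L+1)]
      simp [List.map_map, Function.comp]

lemma funWalk_length (L : ℕ) (c : ℕ → V) (h : ∀ i < L, H.Adj (c i) (c (i+1))) :
    (funWalk H L c h).length = L := by
  induction L generalizing c with
  | zero => simp [funWalk]
  | succ L ih => rw [funWalk, Walk.length_cons, ih]

lemma funWalk_edges (L : ℕ) (c : ℕ → V) (h : ∀ i < L, H.Adj (c i) (c (i+1))) :
    (funWalk H L c h).edges = (List.range L).map (fun i => s(c i, c (i+1))) := by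
  induction L generalizing c with
  | zero => simp [funWalk]
  | succ L ih =>
      rw [funWalk, Walk.edges_cons, ih]
      rw [List.range_succ_eq_map (n := L)]
      simp [List.map_map, Function.comp]

/-- A closed walk of positive length with no backtracking at interior vertices
contains a cycle, hence bounds the extended girth. -/
lemma egirth_le_closed_nb (L : ℕ) (hL : 1 ≤ L) (c : ℕ → V)
    (hcl : c L = c 0) (hadj : ∀ i < L, H.Adj (c i) (c (i+1)))
    (hnb : ∀ i, i + 2 ≤ L → c i ≠ c (i+2)) : H.egirth ≤ L := by
  induction L using Nat.strong_induction_on generalizing c with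
  | _ L IH =>
  by_cases hrep : ∃ i j, i < j ∧ j ≤ L ∧ (0 < i ∨ j < L) ∧ c i = c j
  · obtain ⟨i, j, hij, hjL, hside, hcc⟩ := hrep
    have h1 : j - i < L := by omega
    have := IH (j - i) h1 (by omega) (fun t => c (i + t))
      (by show c (i + (j - i)) = c (i + 0)
          have h2 : i + (j - i) = j := by omega
          rw [h2, Nat.add_zero]; exact hcc.symm)
      (fun t ht => by
        have : i + t < L := by omega
        exact hadj (i + t) this)
      (fun t ht => by
        have h2 : (i + t) + 2 ≤ L := by omega
        have := hnb (i + t) h2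
        simpa [Nat.add_assoc] using this)
    exact this.trans (by exact_mod_cast Nat.cast_le.mpr (by omega : j - i ≤ L))
  · push_neg at hrep
    -- c is injective on suitable ranges; the walk is a genuine cycle
    have hL3 : 3 ≤ L := by
      rcases Nat.lt_or_ge L 3 with h3 | h3
      · interval_cases L
        · exact absurd (hcl ▸ hadj 0 (by omega)) (H.irrefl)
        · exact absurd hcl.symm (hnb 0 (by omega))
      · exact h3
    have hinj : ∀ i j, i ≤ L → j ≤ L → i < j → ¬(i = 0 ∧ j = L) → c i ≠ c j := by
      intro i j hiL hjL hij hnot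
      exact hrep i j hij hjL (by omega)
    set w := ((funWalk H L c hadj).copy rfl hcl) with hw
    have hsupp : w.support = (List.range (L+1)).map c := by
      rw [hw, Walk.support_copy, funWalk_support]
    have hlen : w.length = L := by rw [hw, Walk.length_copy, funWalk_length]
    have hedges : w.edges = (List.range L).map (fun i => s(c i, c (i+1))) := by
      rw [hw, Walk.edges_copy, funWalk_edges]
    have hcyc : w.IsCycle := by
      rw [Walk.isCycle_def]
      refine ⟨⟨?_⟩, ?_, ?_⟩
      · -- trail : edges nodup
        rw [hedges]
        rw [List.nodup_map_iff_inj_on List.nodup_range]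
        intro i hi j hj hsij
        by_contra hne
        wlog hij : i < j generalizing i j
        · exact this j hj i hi hsij.symm (Ne.symm hne) (by omega)
        rw [List.mem_range] at hi hj
        rw [Sym2.eq_iff] at hsij
        rcases hsij with ⟨h1, h2⟩ | ⟨h1, h2⟩
        · exact hinj i j (by omega) (by omega) hij (by omega) h1
        · -- c i = c (j+1), c (i+1) = c j
          rcases Nat.eq_or_lt_of_le (Nat.succ_le_of_lt hj) with hjL' | hjL'
          · -- j + 1 = L
            rcases Nat.eq_zero_or_pos i with hi0 | hi0
            · -- i = 0, j + 1 = L : then c 1 = c (L-1)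
              subst hi0
              have h11 : (1:ℕ) < j := by omega
              exact hinj 1 j (by omega) (by omega) h11 (by omega) h2
            · exact hinj i (j+1) (by omega) (by omega) (by omega) (by omega) h1
          · exact hinj i (j+1) (by omega) (by omega) (by omega) (by omega) h1
      · intro hnil
        have := hlen
        rw [hnil] at this
        simp at this
        omega
      · -- support tail nodup
        rw [hsupp, ← List.map_tail, List.range_eq_range', List.range'_succ, List.tail_cons]
        refine (List.nodup_range' 1 Nat.one_pos).map_on ?_
        intro x hx y hy hcxy
        rw [List.mem_range'] at hx hy
        by_contra hne
        wlog hxy : x < y generalizing x y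
        · exact this y hy x hx hcxy.symm (Ne.symm hne) (by omega)
        exact hinj x y (by omega) (by omega) hxy (by omega) hcxy
    calc H.egirth ≤ ⨅ w : H.Walk (c 0) (c 0), ⨅ _ : w.IsCycle, (w.length : ℕ∞) :=
          iInf_le _ (c 0)
      _ ≤ ⨅ _ : w.IsCycle, (w.length : ℕ∞) := iInf_le _ w
      _ ≤ (w.length : ℕ∞) := iInf_le _ hcyc
      _ = (L : ℕ∞) := by rw [hlen]

/-- Two distinct non-backtracking walks with the same endpoints bound the girth. -/
lemma egirth_le_two_walks_aux (T : ℕ) : ∀ (L1 L2 : ℕ) (c1 c2 : ℕ → V)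
    (_hT : L1 + L2 ≤ T)
    (hstart : c1 0 = c2 0) (hend : c1 L1 = c2 L2)
    (hadj1 : ∀ i < L1, H.Adj (c1 i) (c1 (i+1)))
    (hadj2 : ∀ i < L2, H.Adj (c2 i) (c2 (i+1)))
    (hnb1 : ∀ i, i + 2 ≤ L1 → c1 i ≠ c1 (i+2))
    (hnb2 : ∀ i, i + 2 ≤ L2 → c2 i ≠ c2 (i+2))
    (hne : ¬ (L1 = L2 ∧ ∀ i ≤ L1, c1 i = c2 i)),
    H.egirth ≤ (L1 + L2 : ℕ) := by
  induction T using Nat.strong_induction_on with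
  | _ T IH =>
  intro L1 L2 c1 c2 hT hstart hend hadj1 hadj2 hnb1 hnb2 hne
  rcases Nat.eq_zero_or_pos L1 with h10 | h10
  · subst h10
    rcases Nat.eq_zero_or_pos L2 with h20 | h20
    · exact absurd ⟨h20.symm ▸ rfl, fun i hi => by
        interval_cases i; exact hstart⟩ hne
    · -- c2 is a closed nb walk of positive length
      have hcl : c2 L2 = c2 0 := by rw [← hend, hstart]
      simpa using egirth_le_closed_nb L2 h20 c2 hcl hadj2 hnb2
  rcases Nat.eq_zero_or_pos L2 with h20 | h20
  · subst h20
    have hcl : c1 L1 = c1 0 := by rw [hend, ← hstart]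
    simpa using egirth_le_closed_nb L1 h10 c1 hcl hadj1 hnb1
  by_cases hfirst : c1 1 = c2 1
  · -- strip the common first edge
    have := IH (T - 1) (by omega) (L1 - 1) (L2 - 1)
      (fun i => c1 (i+1)) (fun i => c2 (i+1)) (by omega)
      (by simpa using hfirst)
      (by have e1 : L1 - 1 + 1 = L1 := by omega
          have e2 : L2 - 1 + 1 = L2 := by omega
          simp only [e1, e2]; exact hend)
      (fun i hi => hadj1 (i+1) (by omega))
      (fun i hi => hadj2 (i+1) (by omega))
      (fun i hi => hnb1 (i+1) (by omega))
      (fun i hi => hnb2 (i+1) (by omega))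
      (by rintro ⟨hLeq, hpt⟩
          refine hne ⟨by omega, ?_⟩
          intro i hi
          rcases Nat.eq_zero_or_pos i with h | h
          · subst h; exact hstart
          · have h2 := hpt (i - 1) (by omega)
            have e : i - 1 + 1 = i := by omega
            rwa [e] at h2)
    exact this.trans (by exact_mod_cast Nat.cast_le.mpr (by omega : (L1-1)+(L2-1) ≤ L1+L2))
  · -- concatenate into a closed nb walk based at c1 L1
    set C : ℕ → V := fun i => if i ≤ L1 then c1 (L1 - i) else c2 (i - L1) with hC
    have hCdef1 : ∀ i, i ≤ L1 → C i = c1 (L1 - i) := fun i hi => by simp [hC, hi]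
    have hCdef2 : ∀ i, L1 ≤ i → C i = c2 (i - L1) := by
      intro i hi
      rcases Nat.eq_or_lt_of_le hi with h | h
      · subst h; simp [hC, hstart]
      · simp [hC, Nat.not_le.mpr h]
    have hcl : C (L1 + L2) = C 0 := by
      rw [hCdef2 _ (by omega), hCdef1 0 (by omega)]
      simp [hend]
    have hadjC : ∀ i < L1 + L2, H.Adj (C i) (C (i+1)) := by
      intro i hi
      rcases Nat.lt_or_ge i L1 with h | h
      · rw [hCdef1 i (by omega), hCdef1 (i+1) (by omega)]
        have e : L1 - i = (L1 - (i+1)) + 1 := by omega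
        rw [e]
        exact (hadj1 (L1 - (i+1)) (by omega)).symm
      · rw [hCdef2 i h, hCdef2 (i+1) (by omega)]
        have e : i + 1 - L1 = (i - L1) + 1 := by omega
        rw [e]
        exact hadj2 (i - L1) (by omega)
    have hnbC : ∀ i, i + 2 ≤ L1 + L2 → C i ≠ C (i+2) := by
      intro i hi
      rcases Nat.lt_or_ge (i+2) L1 with h | h
      · rw [hCdef1 i (by omega), hCdef1 (i+2) (by omega)]
        have e : L1 - i = (L1 - (i+2)) + 2 := by omega
        rw [e]
        exact (hnb1 (L1 - (i+2)) (by omega)).symm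
      · rcases Nat.eq_or_lt_of_le h with h' | h'
        · -- i + 2 = L1
          rw [hCdef1 i (by omega), hCdef1 (i+2) (by omega)]
          have e1 : L1 - i = 2 := by omega
          have e2 : L1 - (i+2) = 0 := by omega
          rw [e1, e2]
          exact (hnb1 0 (by omega)).symm
        · rcases Nat.lt_or_ge i L1 with h'' | h''
          · -- i < L1 < i + 2, so i = L1 - 1
            have e : i = L1 - 1 := by omega
            rw [hCdef1 i (by omega), hCdef2 (i+2) (by omega)]
            have e1 : L1 - i = 1 := by omega
            have e2 : i + 2 - L1 = 1 := by omega
            rw [e1, e2]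
            exact fun hc => hfirst hc
          · rw [hCdef2 i h'', hCdef2 (i+2) (by omega)]
            have e : i + 2 - L1 = (i - L1) + 2 := by omega
            rw [e]
            exact hnb2 (i - L1) (by omega)
    exact egirth_le_closed_nb (L1 + L2) (by omega) C hcl hadjC hnbC

lemma egirth_le_two_walks (L1 L2 : ℕ) (c1 c2 : ℕ → V)
    (hstart : c1 0 = c2 0) (hend : c1 L1 = c2 L2)
    (hadj1 : ∀ i < L1, H.Adj (c1 i) (c1 (i+1)))
    (hadj2 : ∀ i < L2, H.Adj (c2 i) (c2 (i+1)))
    (hnb1 : ∀ i, i + 2 ≤ L1 → c1 i ≠ c1 (i+2))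
    (hnb2 : ∀ i, i + 2 ≤ L2 → c2 i ≠ c2 (i+2))
    (hne : ¬ (L1 = L2 ∧ ∀ i ≤ L1, c1 i = c2 i)) :
    H.egirth ≤ (L1 + L2 : ℕ) :=
  egirth_le_two_walks_aux (L1 + L2) L1 L2 c1 c2 le_rfl hstart hend hadj1 hadj2 hnb1 hnb2 hne

namespace TreeBound

variable {n m : ℕ}

abbrev Step (n m : ℕ) := Fin m × Fin n

/-- endpoint variable of a (reversed) alternating path; head is the latest step. -/
def endvar (r : Fin n) : List (Step n m) → Fin n
  | [] => r
  | e :: _ => e.2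

/-- valid extensions of an alternating path. -/
def extF (G : TannerGraph n m) (r : Fin n) (l : List (Step n m)) : Finset (Step n m) :=
  (Finset.univ.filter (fun j : Fin m =>
      endvar r l ∈ G.N j ∧ ∀ e ∈ l.head?, j ≠ e.1)).biUnion
    (fun j => ((G.N j).erase (endvar r l)).image (fun w => (j, w)))

/-- level sets of alternating non-backtracking paths from root `r`. -/
def lev (G : TannerGraph n m) (r : Fin n) : ℕ → Finset (List (Step n m))
  | 0 => {[]}
  | (s+1) => (lev G r s).biUnion (fun l => (extF G r l).image (fun e => e :: l))

/-- branch level sets: like `lev` but the first step must use check `j₀`.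
`levB s` consists of paths of length `s+1`. -/
def levB (G : TannerGraph n m) (r : Fin n) (j₀ : Fin m) : ℕ → Finset (List (Step n m))
  | 0 => ((G.N j₀).erase r).image (fun w => [(j₀, w)])
  | (s+1) => (levB G r j₀ s).biUnion (fun l => (extF G r l).image (fun e => e :: l))

/-- walk function associated to an alternating path, from the endpoint back to root. -/
def bw (r : Fin n) : List (Step n m) → ℕ → (Fin n ⊕ Fin m)
  | [], _ => Sum.inl r
  | e :: _, 0 => Sum.inl e.2
  | e :: _, 1 => Sum.inr e.1
  | e :: l', (k+2) => bw r l' k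

lemma adj_iff (G : TannerGraph n m) (i : Fin n) (j : Fin m) :
    G.graph.Adj (Sum.inl i) (Sum.inr j) ↔ i ∈ G.N j := by
  simp [TannerGraph.graph, SimpleGraph.fromRel_adj]

lemma bw_zero (r : Fin n) (l : List (Step n m)) : bw r l 0 = Sum.inl (endvar r l) := by
  cases l <;> rfl

lemma bw_ge (r : Fin n) (l : List (Step n m)) (k : ℕ) (h : 2 * l.length ≤ k) :
    bw r l k = Sum.inl r := by
  induction l generalizing k with
  | nil => cases k with
    | zero => rfl
    | succ k => cases k with
      | zero => rfl
      | succ k => simp [bw]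
  | cons e l' ih =>
      simp only [List.length_cons] at h
      match k, h with
      | (k+2), h => exact ih k (by omega)

lemma mem_extF {G : TannerGraph n m} {r : Fin n} {l : List (Step n m)} {e : Step n m}
    (h : e ∈ extF G r l) :
    endvar r l ∈ G.N e.1 ∧ e.2 ∈ G.N e.1 ∧ e.2 ≠ endvar r l ∧ ∀ e' ∈ l.head?, e.1 ≠ e'.1 := by
  simp only [extF, Finset.mem_biUnion, Finset.mem_filter, Finset.mem_univ, true_and,
    Finset.mem_image, Finset.mem_erase] at h
  obtain ⟨j, ⟨hj1, hj2⟩, w, ⟨hw1, hw2⟩, he⟩ := h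
  subst he
  exact ⟨hj1, hw2, hw1, hj2⟩

/-- structural properties of paths in `lev`. -/
lemma lev_prop (G : TannerGraph n m) (r : Fin n) (s : ℕ) (l : List (Step n m))
    (hl : l ∈ lev G r s) :
    l.length = s ∧
    (∀ i < 2*s, G.graph.Adj (bw r l i) (bw r l (i+1))) ∧
    (∀ i, i + 2 ≤ 2*s → bw r l i ≠ bw r l (i+2)) := by
  induction s generalizing l with
  | zero =>
      simp only [lev, Finset.mem_singleton] at hl
      subst hl
      exact ⟨rfl, by omega, by omega⟩
  | succ s ih =>
      simp only [lev, Finset.mem_biUnion, Finset.mem_image] at hl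
      obtain ⟨l', hl', e, he, rfl⟩ := hl
      obtain ⟨hlen, hadj, hnb⟩ := ih l' hl'
      obtain ⟨h1, h2, h3, h4⟩ := mem_extF he
      refine ⟨by simp [hlen], ?_, ?_⟩
      · intro i hi
        match i with
        | 0 => show G.graph.Adj (Sum.inl e.2) (Sum.inr e.1)
               exact (adj_iff G e.2 e.1).mpr h2
        | 1 => show G.graph.Adj (Sum.inr e.1) (bw r l' 0)
               rw [bw_zero]
               exact ((adj_iff G (endvar r l') e.1).mpr h1).symm
        | (i+2) => exact hadj i (by omega)
      · intro i hi
        match i with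
        | 0 => show Sum.inl e.2 ≠ bw r l' 0
               rw [bw_zero]
               simpa using h3
        | 1 => show Sum.inr e.1 ≠ bw r l' 1
               match l', hlen with
               | [], hlen => simp only [List.length_nil] at hlen; omega
               | e' :: l'', _ =>
                   show Sum.inr e.1 ≠ Sum.inr e'.1
                   simpa using h4 e' rfl
        | (i+2) => exact hnb i (by omega)

/-- the walk function determines the path. -/
lemma bw_inj (r : Fin n) (l1 l2 : List (Step n m)) (hlen : l1.length = l2.length)
    (h : ∀ i ≤ 2 * l1.length, bw r l1 i = bw r l2 i) : l1 = l2 := by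
  induction l1 generalizing l2 with
  | nil => cases l2 with
    | nil => rfl
    | cons e l2' => simp at hlen
  | cons e l1' ih =>
      cases l2 with
      | nil => simp at hlen
      | cons e2 l2' =>
          have h0 := h 0 (by omega)
          have h1 := h 1 (by simp; omega)
          simp only [bw] at h0 h1
          have he : e = e2 := Prod.ext (by simpa using h1) (by simpa using h0)
          subst he
          have : l1' = l2' := by
            refine ih l2' (by simpa using hlen) ?_
            intro i hi
            have := h (i + 2) (by simp at hi ⊢; omega)
            simpa [bw] using this
          rw [this]

end TreeBound

namespace TreeBound

variable {n m : ℕ}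

lemma lev_succ (G : TannerGraph n m) (r : Fin n) (s : ℕ) :
    lev G r (s+1) = (lev G r s).biUnion (fun l => (extF G r l).image (fun e => e :: l)) := rfl

lemma levB_sub (G : TannerGraph n m) (r : Fin n) (j₀ : Fin m) (hj₀ : r ∈ G.N j₀) (s : ℕ) :
    levB G r j₀ s ⊆ lev G r (s+1) := by
  induction s with
  | zero =>
      intro l hl
      simp only [levB, Finset.mem_image] at hl
      obtain ⟨w, hw, rfl⟩ := hl
      simp only [Finset.mem_erase] at hw
      simp only [lev, Finset.mem_biUnion, Finset.mem_singleton, Finset.mem_image]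
      refine ⟨[], rfl, (j₀, w), ?_, rfl⟩
      simp only [extF, Finset.mem_biUnion, Finset.mem_filter, Finset.mem_univ, true_and,
        Finset.mem_image, Finset.mem_erase]
      exact ⟨j₀, ⟨hj₀, by simp⟩, w, ⟨hw.1, hw.2⟩, rfl⟩
  | succ s ih =>
      intro l hl
      simp only [levB, Finset.mem_biUnion, Finset.mem_image] at hl
      obtain ⟨l', hl', e, he, rfl⟩ := hl
      rw [lev_succ, Finset.mem_biUnion]
      exact ⟨l', ih hl', Finset.mem_image.mpr ⟨e, he, rfl⟩⟩

lemma levB_last (G : TannerGraph n m) (r : Fin n) (j₀ : Fin m) (s : ℕ) (l : List (Step n m))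
    (hl : l ∈ levB G r j₀ s) : bw r l (2*(s+1) - 1) = Sum.inr j₀ := by
  induction s generalizing l with
  | zero =>
      simp only [levB, Finset.mem_image] at hl
      obtain ⟨w, _, rfl⟩ := hl
      rfl
  | succ s ih =>
      simp only [levB, Finset.mem_biUnion, Finset.mem_image] at hl
      obtain ⟨l', hl', e, _, rfl⟩ := hl
      have : 2 * (s + 1 + 1) - 1 = (2 * (s + 1) - 1) + 2 := by omega
      rw [this]
      show bw r l' (2*(s+1)-1) = Sum.inr j₀
      exact ih l' hl'

section Inject

variable (G : TannerGraph n m) (r : Fin n)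

/-- endpoints of distinct paths in levels `s1, s2` are distinct, provided there are no
cycles of length `≤ 2*s1+2*s2`. -/
lemma endvar_inj (s1 s2 : ℕ) (l1 l2 : List (Step n m))
    (h1 : l1 ∈ lev G r s1) (h2 : l2 ∈ lev G r s2) (hne : l1 ≠ l2)
    (hend : endvar r l1 = endvar r l2) :
    G.graph.egirth ≤ (2*s1 + 2*s2 : ℕ) := by
  obtain ⟨hlen1, hadj1, hnb1⟩ := lev_prop G r s1 l1 h1
  obtain ⟨hlen2, hadj2, hnb2⟩ := lev_prop G r s2 l2 h2
  refine egirth_le_two_walks (2*s1) (2*s2) (bw r l1) (bw r l2) ?_ ?_ hadj1 hadj2 hnb1 hnb2 ?_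
  · rw [bw_zero, bw_zero, hend]
  · rw [bw_ge r l1 _ (by omega), bw_ge r l2 _ (by omega)]
  · rintro ⟨hL, hpt⟩
    refine hne (bw_inj r l1 l2 (by omega) ?_)
    intro i hi
    rcases le_or_gt i (2*s1) with h | h
    · exact hpt i h
    · rw [bw_ge r l1 i (by omega), bw_ge r l2 i (by omega)]

/-- endpoints of distinct paths in the same branch level are distinct, with an improved
bound: cycles of length `≤ 4s+2` suffice. -/
lemma endvar_injB (j₀ : Fin m) (hj₀ : r ∈ G.N j₀) (s : ℕ) (l1 l2 : List (Step n m))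
    (h1 : l1 ∈ levB G r j₀ s) (h2 : l2 ∈ levB G r j₀ s) (hne : l1 ≠ l2)
    (hend : endvar r l1 = endvar r l2) :
    G.graph.egirth ≤ ((2*(s+1)-1) + (2*(s+1)-1) : ℕ) := by
  obtain ⟨hlen1, hadj1, hnb1⟩ := lev_prop G r (s+1) l1 (levB_sub G r j₀ hj₀ s h1)
  obtain ⟨hlen2, hadj2, hnb2⟩ := lev_prop G r (s+1) l2 (levB_sub G r j₀ hj₀ s h2)
  set K := 2*(s+1) - 1 with hK
  refine egirth_le_two_walks K K (fun i => bw r l1 (K - i)) (fun i => bw r l2 (K - i))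
    ?_ ?_ ?_ ?_ ?_ ?_ ?_
  · simp only [Nat.sub_zero]
    rw [levB_last G r j₀ s l1 h1, levB_last G r j₀ s l2 h2]
  · simp only [Nat.sub_self]
    rw [bw_zero, bw_zero, hend]
  · intro i hi
    show G.graph.Adj (bw r l1 (K - i)) (bw r l1 (K - (i+1)))
    have e : K - i = (K - (i+1)) + 1 := by omega
    rw [e]
    exact (hadj1 (K - (i+1)) (by omega)).symm
  · intro i hi
    show G.graph.Adj (bw r l2 (K - i)) (bw r l2 (K - (i+1)))
    have e : K - i = (K - (i+1)) + 1 := by omega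
    rw [e]
    exact (hadj2 (K - (i+1)) (by omega)).symm
  · intro i hi
    show bw r l1 (K - i) ≠ bw r l1 (K - (i+2))
    have e : K - i = (K - (i+2)) + 2 := by omega
    rw [e]
    exact (hnb1 (K - (i+2)) (by omega)).symm
  · intro i hi
    show bw r l2 (K - i) ≠ bw r l2 (K - (i+2))
    have e : K - i = (K - (i+2)) + 2 := by omega
    rw [e]
    exact (hnb2 (K - (i+2)) (by omega)).symm
  · rintro ⟨_, hpt⟩
    refine hne (bw_inj r l1 l2 (by omega) ?_)
    intro i hi
    rcases le_or_gt i K with h | h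
    · have := hpt (K - i) (by omega)
      have e : K - (K - i) = i := by omega
      rwa [e] at this
    · rw [bw_ge r l1 i (by omega), bw_ge r l2 i (by omega)]

end Inject

end TreeBound

namespace TreeBound

variable {n m : ℕ}

section Sums

variable (G : TannerGraph n m) (r : Fin n) (p : Fin n → ℝ)

lemma sum_biUnion_ext (A : Finset (List (Step n m))) (f : List (Step n m) → ℝ) :
    ∑ l ∈ A.biUnion (fun l => (extF G r l).image (fun e => e :: l)), f l
      = ∑ l ∈ A, ∑ e ∈ extF G r l, f (e :: l) := by
  rw [Finset.sum_biUnion]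
  · refine Finset.sum_congr rfl (fun l _ => ?_)
    rw [Finset.sum_image]
    intro e _ e' _ h
    exact (List.cons.injEq _ _ _ _ ▸ h).1
  · intro l1 h1 l2 h2 hne
    simp only [Finset.disjoint_left, Finset.mem_image]
    rintro x ⟨e1, _, rfl⟩ ⟨e2, _, hx⟩
    exact hne ((List.cons.injEq _ _ _ _ ▸ hx).2.symm ▸ rfl)

variable {G r p}

lemma sum_extF_ge (hp0 : ∀ i, 0 ≤ p i) (ek : ℕ)
    (hcone : ∀ j : Fin m, ∀ i ∈ G.N j, (ek : ℝ) * p i ≤ ∑ w ∈ G.N j, p w)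
    (hek1 : 1 ≤ ek)
    (l : List (Step n m)) (c : ℕ)
    (hc : c ≤ (Finset.univ.filter (fun j : Fin m =>
        endvar r l ∈ G.N j ∧ ∀ e ∈ l.head?, j ≠ e.1)).card) :
    (c : ℝ) * ((ek : ℝ) - 1) * p (endvar r l) ≤ ∑ e ∈ extF G r l, p e.2 := by
  set v := endvar r l with hv
  set J := Finset.univ.filter (fun j : Fin m => v ∈ G.N j ∧ ∀ e ∈ l.head?, j ≠ e.1) with hJ
  have hsum : ∑ e ∈ extF G r l, p e.2 = ∑ j ∈ J, ∑ w ∈ (G.N j).erase v, p w := by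
    rw [extF, Finset.sum_biUnion]
    · refine Finset.sum_congr rfl (fun j _ => ?_)
      rw [Finset.sum_image]
      intro w _ w' _ h
      exact (Prod.mk.injEq _ _ _ _ ▸ h).2
    · intro j1 _ j2 _ hne
      simp only [Finset.disjoint_left, Finset.mem_image]
      rintro x ⟨w1, _, rfl⟩ ⟨w2, _, hx⟩
      exact hne ((Prod.mk.injEq _ _ _ _ ▸ hx).1.symm ▸ rfl)
  rw [hsum]
  have hterm : ∀ j ∈ J, ((ek : ℝ) - 1) * p v ≤ ∑ w ∈ (G.N j).erase v, p w := by
    intro j hj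
    simp only [hJ, Finset.mem_filter] at hj
    have hvj : v ∈ G.N j := hj.2.1
    have := hcone j v hvj
    have herase : ∑ w ∈ (G.N j).erase v, p w = (∑ w ∈ G.N j, p w) - p v := by
      rw [Finset.sum_erase_eq_sub hvj]
    rw [herase]
    nlinarith [hp0 v]
  calc (c : ℝ) * ((ek : ℝ) - 1) * p v ≤ (J.card : ℝ) * (((ek : ℝ) - 1) * p v) := by
        have h1 : (0:ℝ) ≤ ((ek : ℝ) - 1) * p v := by
          have : (1:ℝ) ≤ (ek:ℝ) := by exact_mod_cast hek1
          have := hp0 v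
          nlinarith
        have h2 : (c : ℝ) ≤ (J.card : ℝ) := by exact_mod_cast hc
        nlinarith
    _ ≤ ∑ j ∈ J, ∑ w ∈ (G.N j).erase v, p w := by
        have h := Finset.card_nsmul_le_sum J (fun j => ∑ w ∈ (G.N j).erase v, p w)
          (((ek : ℝ) - 1) * p v) hterm
        rwa [nsmul_eq_mul] at h

lemma card_filter_ge (G : TannerGraph n m) (r : Fin n) (d : ℕ)
    (hdeg : ∀ i : Fin n, d ≤ G.varDeg i) (l : List (Step n m)) :
    d - 1 ≤ (Finset.univ.filter (fun j : Fin m =>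
        endvar r l ∈ G.N j ∧ ∀ e ∈ l.head?, j ≠ e.1)).card := by
  set v := endvar r l
  cases l with
  | nil =>
      have : (Finset.univ.filter (fun j : Fin m => v ∈ G.N j ∧ ∀ e ∈ ([] : List (Step n m)).head?, j ≠ e.1))
          = Finset.univ.filter (fun j : Fin m => v ∈ G.N j) := by
        refine Finset.filter_congr (fun j _ => ?_)
        simp
      rw [this]
      have := hdeg v
      rw [TannerGraph.varDeg] at this
      omega
  | cons e' l' =>
      have hsub : (Finset.univ.filter (fun j : Fin m => v ∈ G.N j)).erase e'.1
          ⊆ Finset.univ.filter (fun j : Fin m =>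
              v ∈ G.N j ∧ ∀ e ∈ (e' :: l').head? , j ≠ e.1) := by
        intro j hj
        simp only [Finset.mem_erase, Finset.mem_filter, Finset.mem_univ, true_and] at hj ⊢
        refine ⟨hj.2, ?_⟩
        intro e he
        simp only [List.head?_cons, Option.mem_def, Option.some.injEq] at he
        subst he
        exact hj.1
      have h1 := Finset.card_le_card hsub
      have h2 : (Finset.univ.filter (fun j : Fin m => v ∈ G.N j)).card = G.varDeg v := rfl
      have h3 := hdeg v
      have h4 := Finset.card_erase_of_mem (a := e'.1) (s := Finset.univ.filter (fun j : Fin m => v ∈ G.N j))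
      by_cases hmem : e'.1 ∈ Finset.univ.filter (fun j : Fin m => v ∈ G.N j)
      · have := h4 hmem
        omega
      · have := Finset.erase_eq_of_notMem hmem
        rw [this] at h1
        omega

end Sums

end TreeBound

namespace TreeBound

variable {n m : ℕ}

section Levels

variable {G : TannerGraph n m} {r : Fin n} {p : Fin n → ℝ} {d ek : ℕ}

variable (hp0 : ∀ i, 0 ≤ p i)
  (hcone : ∀ j : Fin m, ∀ i ∈ G.N j, (ek : ℝ) * p i ≤ ∑ w ∈ G.N j, p w)
  (hd : 2 ≤ d) (hek2 : 2 ≤ ek)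
  (hdeg : ∀ i : Fin n, d ≤ G.varDeg i)

include hp0 hcone hd hek2 hdeg

lemma sum_ext_level (A : Finset (List (Step n m))) :
    ((d:ℝ)-1) * ((ek:ℝ)-1) * (∑ l ∈ A, p (endvar r l))
      ≤ ∑ l ∈ A.biUnion (fun l => (extF G r l).image (fun e => e :: l)), p (endvar r l) := by
  rw [sum_biUnion_ext G r A (fun l => p (endvar r l))]
  have key : ∀ l ∈ A, ((d:ℝ)-1) * ((ek:ℝ)-1) * p (endvar r l)
      ≤ ∑ e ∈ extF G r l, p (endvar r (e :: l)) := by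
    intro l _
    have h := sum_extF_ge hp0 ek hcone (by omega) l (d-1) (card_filter_ge G r d hdeg l)
    have hc : ((d-1 : ℕ) : ℝ) = (d:ℝ) - 1 := by
      push_cast [Nat.cast_sub (by omega : 1 ≤ d)]
      ring
    rw [hc] at h
    simpa [endvar] using h
  calc ((d:ℝ)-1) * ((ek:ℝ)-1) * (∑ l ∈ A, p (endvar r l))
      = ∑ l ∈ A, ((d:ℝ)-1) * ((ek:ℝ)-1) * p (endvar r l) := by rw [Finset.mul_sum]
    _ ≤ _ := Finset.sum_le_sum key

lemma LS_zero : ∑ l ∈ lev G r 0, p (endvar r l) = p r := by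
  simp [lev, endvar]

lemma LS_one : (d:ℝ) * ((ek:ℝ)-1) * p r ≤ ∑ l ∈ lev G r 1, p (endvar r l) := by
  rw [lev_succ, sum_biUnion_ext G r _ (fun l => p (endvar r l))]
  show (d:ℝ) * ((ek:ℝ)-1) * p r ≤ ∑ l ∈ ({[]} : Finset (List (Step n m))), _
  rw [Finset.sum_singleton]
  have hcard : d ≤ (Finset.univ.filter (fun j : Fin m =>
      endvar r ([] : List (Step n m)) ∈ G.N j ∧ ∀ e ∈ ([] : List (Step n m)).head?, j ≠ e.1)).card := by
    have : (Finset.univ.filter (fun j : Fin m =>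
        endvar r ([] : List (Step n m)) ∈ G.N j ∧ ∀ e ∈ ([] : List (Step n m)).head?, j ≠ e.1))
        = Finset.univ.filter (fun j : Fin m => r ∈ G.N j) := by
      refine Finset.filter_congr (fun j _ => ?_)
      simp [endvar]
    rw [this]
    exact hdeg r
  have h := sum_extF_ge hp0 ek hcone (by omega) ([] : List (Step n m)) d hcard
  simpa [endvar] using h

lemma LS_ge (s : ℕ) :
    (d:ℝ) * ((d:ℝ)-1)^s * ((ek:ℝ)-1)^(s+1) * p r ≤ ∑ l ∈ lev G r (s+1), p (endvar r l) := by
  induction s with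
  | zero => simpa using LS_one hp0 hcone hd hek2 hdeg
  | succ s ih =>
      have step := sum_ext_level hp0 hcone hd hek2 hdeg (G := G) (r := r) (lev G r (s+1))
      rw [← lev_succ] at step
      have hmul : ((d:ℝ)-1) * ((ek:ℝ)-1) * ((d:ℝ) * ((d:ℝ)-1)^s * ((ek:ℝ)-1)^(s+1) * p r)
          ≤ ((d:ℝ)-1) * ((ek:ℝ)-1) * (∑ l ∈ lev G r (s+1), p (endvar r l)) := by
        refine mul_le_mul_of_nonneg_left ih ?_
        have h1 : (1:ℝ) ≤ (d:ℝ) - 1 := by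
          have : (2:ℝ) ≤ (d:ℝ) := by exact_mod_cast hd
          linarith
        have h2 : (1:ℝ) ≤ (ek:ℝ) - 1 := by
          have : (2:ℝ) ≤ (ek:ℝ) := by exact_mod_cast hek2
          linarith
        nlinarith
      calc (d:ℝ) * ((d:ℝ)-1)^(s+1) * ((ek:ℝ)-1)^(s+2) * p r
          = ((d:ℝ)-1) * ((ek:ℝ)-1) * ((d:ℝ) * ((d:ℝ)-1)^s * ((ek:ℝ)-1)^(s+1) * p r) := by ring
        _ ≤ _ := hmul.trans step

variable (hj₀ : True)

lemma BS_zero {j₀ : Fin m} (hj₀ : r ∈ G.N j₀) :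
    ((ek:ℝ)-1) * p r ≤ ∑ l ∈ levB G r j₀ 0, p (endvar r l) := by
  show ((ek:ℝ)-1) * p r ≤ ∑ l ∈ ((G.N j₀).erase r).image (fun w => [(j₀, w)]), p (endvar r l)
  rw [Finset.sum_image (by intro a _ b _ h; simpa using h)]
  have herase : ∑ w ∈ (G.N j₀).erase r, p (endvar r [(j₀, w)]) = (∑ w ∈ G.N j₀, p w) - p r := by
    show ∑ w ∈ (G.N j₀).erase r, p w = _
    rw [Finset.sum_erase_eq_sub hj₀]
  rw [herase]
  have := hcone j₀ r hj₀
  nlinarith [hp0 r]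

lemma BS_ge {j₀ : Fin m} (hj₀ : r ∈ G.N j₀) (s : ℕ) :
    ((d:ℝ)-1)^s * ((ek:ℝ)-1)^(s+1) * p r ≤ ∑ l ∈ levB G r j₀ s, p (endvar r l) := by
  induction s with
  | zero => simpa using BS_zero hp0 hcone hd hek2 hdeg hj₀
  | succ s ih =>
      have step := sum_ext_level hp0 hcone hd hek2 hdeg (G := G) (r := r) (levB G r j₀ s)
      have hstep : ∑ l ∈ (levB G r j₀ s).biUnion (fun l => (extF G r l).image (fun e => e :: l)),
          p (endvar r l) = ∑ l ∈ levB G r j₀ (s+1), p (endvar r l) := rfl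
      rw [hstep] at step
      have hmul : ((d:ℝ)-1) * ((ek:ℝ)-1) * (((d:ℝ)-1)^s * ((ek:ℝ)-1)^(s+1) * p r)
          ≤ ((d:ℝ)-1) * ((ek:ℝ)-1) * (∑ l ∈ levB G r j₀ s, p (endvar r l)) := by
        refine mul_le_mul_of_nonneg_left ih ?_
        have h1 : (1:ℝ) ≤ (d:ℝ) - 1 := by
          have : (2:ℝ) ≤ (d:ℝ) := by exact_mod_cast hd
          linarith
        have h2 : (1:ℝ) ≤ (ek:ℝ) - 1 := by
          have : (2:ℝ) ≤ (ek:ℝ) := by exact_mod_cast hek2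
          linarith
        nlinarith
      calc ((d:ℝ)-1)^(s+1) * ((ek:ℝ)-1)^(s+2) * p r
          = ((d:ℝ)-1) * ((ek:ℝ)-1) * (((d:ℝ)-1)^s * ((ek:ℝ)-1)^(s+1) * p r) := by ring
        _ ≤ _ := hmul.trans step

end Levels

end TreeBound

namespace TreeBound

variable {n m : ℕ}

section Totals

variable {G : TannerGraph n m} {r : Fin n} {p : Fin n → ℝ}

lemma total_levels (hp0 : ∀ i, 0 ≤ p i) (t : ℕ)
    (hnc : ¬ (G.graph.egirth ≤ ((4*t : ℕ) : ℕ∞))) :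
    ∑ s ∈ Finset.range (t+1), ∑ l ∈ lev G r s, p (endvar r l) ≤ ∑ i, p i := by
  have hinj : ∀ s1, s1 ≤ t → ∀ s2, s2 ≤ t → ∀ l1 ∈ lev G r s1, ∀ l2 ∈ lev G r s2,
      endvar r l1 = endvar r l2 → l1 = l2 := by
    intro s1 hs1 s2 hs2 l1 hl1 l2 hl2 he
    by_contra hne
    refine hnc ((endvar_inj G r s1 s2 l1 l2 hl1 hl2 hne he).trans ?_)
    exact_mod_cast Nat.cast_le.mpr (by omega : 2*s1 + 2*s2 ≤ 4*t)
  have himg : ∀ s, s ≤ t → ∑ l ∈ lev G r s, p (endvar r l)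
      = ∑ i ∈ (lev G r s).image (endvar r), p i := by
    intro s hs
    rw [Finset.sum_image]
    intro l1 h1 l2 h2 he
    exact hinj s hs s hs l1 h1 l2 h2 he
  calc ∑ s ∈ Finset.range (t+1), ∑ l ∈ lev G r s, p (endvar r l)
      = ∑ s ∈ Finset.range (t+1), ∑ i ∈ (lev G r s).image (endvar r), p i := by
        refine Finset.sum_congr rfl (fun s hs => ?_)
        exact himg s (by simpa using Nat.lt_succ_iff.mp (Finset.mem_range.mp hs))
    _ = ∑ i ∈ (Finset.range (t+1)).biUnion (fun s => (lev G r s).image (endvar r)), p i := by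
        rw [Finset.sum_biUnion]
        intro s1 h1 s2 h2 hne
        simp only [Finset.coe_mem, Finset.mem_coe, Finset.mem_range] at h1 h2
        simp only [Finset.disjoint_left, Finset.mem_image]
        rintro x ⟨l1, hl1, rfl⟩ ⟨l2, hl2, hx⟩
        have := hinj s1 (by omega) s2 (by omega) l1 hl1 l2 hl2 hx.symm
        subst this
        have e1 := (lev_prop G r s1 l1 hl1).1
        have e2 := (lev_prop G r s2 l1 hl2).1
        exact hne (by omega)
    _ ≤ ∑ i, p i := by
        refine Finset.sum_le_sum_of_subset_of_nonneg (Finset.subset_univ _) ?_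
        intro i _ _
        exact hp0 i

lemma total_levels_branch (hp0 : ∀ i, 0 ≤ p i) (t : ℕ) {j₀ : Fin m} (hj₀ : r ∈ G.N j₀)
    (hnc : ¬ (G.graph.egirth ≤ ((4*t+2 : ℕ) : ℕ∞))) :
    (∑ s ∈ Finset.range (t+1), ∑ l ∈ lev G r s, p (endvar r l))
      + ∑ l ∈ levB G r j₀ t, p (endvar r l) ≤ ∑ i, p i := by
  have hnc' : ¬ (G.graph.egirth ≤ ((4*t : ℕ) : ℕ∞)) := by
    intro h
    exact hnc (h.trans (by exact_mod_cast Nat.cast_le.mpr (by omega : 4*t ≤ 4*t+2)))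
  have hinj : ∀ s1, s1 ≤ t → ∀ s2, s2 ≤ t → ∀ l1 ∈ lev G r s1, ∀ l2 ∈ lev G r s2,
      endvar r l1 = endvar r l2 → l1 = l2 := by
    intro s1 hs1 s2 hs2 l1 hl1 l2 hl2 he
    by_contra hne
    refine hnc' ((endvar_inj G r s1 s2 l1 l2 hl1 hl2 hne he).trans ?_)
    exact_mod_cast Nat.cast_le.mpr (by omega : 2*s1 + 2*s2 ≤ 4*t)
  have hinjB : ∀ l1 ∈ levB G r j₀ t, ∀ l2 ∈ levB G r j₀ t,
      endvar r l1 = endvar r l2 → l1 = l2 := by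
    intro l1 h1 l2 h2 he
    by_contra hne
    refine hnc ((endvar_injB G r j₀ hj₀ t l1 l2 h1 h2 hne he).trans ?_)
    exact_mod_cast Nat.cast_le.mpr (by omega : (2*(t+1)-1) + (2*(t+1)-1) ≤ 4*t+2)
  set U := (Finset.range (t+1)).biUnion (fun s => (lev G r s).image (endvar r)) with hU
  set IB := (levB G r j₀ t).image (endvar r) with hIB
  have hUdisj : Disjoint U IB := by
    simp only [hU, hIB, Finset.disjoint_left, Finset.mem_biUnion, Finset.mem_image,
      Finset.mem_range]
    rintro x ⟨s, hs, l1, hl1, rfl⟩ ⟨l2, hl2, hx⟩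
    have hl2' := levB_sub G r j₀ hj₀ t hl2
    have hne : l1 ≠ l2 := by
      intro h
      have e1 := (lev_prop G r s l1 hl1).1
      have e2 := (lev_prop G r (t+1) l2 hl2').1
      rw [h] at e1
      omega
    refine hnc ((endvar_inj G r s (t+1) l1 l2 hl1 hl2' hne hx.symm).trans ?_)
    exact_mod_cast Nat.cast_le.mpr (by omega : 2*s + 2*(t+1) ≤ 4*t+2)
  have h1 : ∑ s ∈ Finset.range (t+1), ∑ l ∈ lev G r s, p (endvar r l) = ∑ i ∈ U, p i := by
    rw [hU]
    have himg : ∀ s, s ≤ t → ∑ l ∈ lev G r s, p (endvar r l)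
        = ∑ i ∈ (lev G r s).image (endvar r), p i := by
      intro s hs
      rw [Finset.sum_image]
      intro l1 ha l2 hb he
      exact hinj s hs s hs l1 ha l2 hb he
    rw [Finset.sum_biUnion]
    · refine Finset.sum_congr rfl (fun s hs => ?_)
      exact himg s (by simpa using Nat.lt_succ_iff.mp (Finset.mem_range.mp hs))
    · intro s1 ha s2 hb hne
      simp only [Finset.mem_coe, Finset.mem_range] at ha hb
      simp only [Finset.disjoint_left, Finset.mem_image]
      rintro x ⟨l1, hl1, rfl⟩ ⟨l2, hl2, hx⟩
      have := hinj s1 (by omega) s2 (by omega) l1 hl1 l2 hl2 hx.symm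
      subst this
      have e1 := (lev_prop G r s1 l1 hl1).1
      have e2 := (lev_prop G r s2 l1 hl2).1
      exact hne (by omega)
  have h2 : ∑ l ∈ levB G r j₀ t, p (endvar r l) = ∑ i ∈ IB, p i := by
    rw [hIB, Finset.sum_image]
    intro l1 ha l2 hb he
    exact hinjB l1 ha l2 hb he
  rw [h1, h2, ← Finset.sum_union hUdisj]
  refine Finset.sum_le_sum_of_subset_of_nonneg (Finset.subset_univ _) ?_
  intro i _ _
  exact hp0 i

end Totals

end TreeBound

namespace TreeBound

lemma weights_ge {n : ℕ} (p : Fin n → ℝ) (hp0 : ∀ i, 0 ≤ p i) (hpne : p ≠ 0)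
    (i₀ : Fin n) (hmax : ∀ i, p i ≤ p i₀) (T : ℕ)
    (hS : (T:ℝ) * p i₀ ≤ ∑ j, p j) :
    (T:ℝ) ≤ wBSC p ∧ (T:ℝ) ≤ wAWGN p := by
  have hpos : 0 < p i₀ := by
    have hex : ∃ i, p i ≠ 0 := by
      by_contra h
      push_neg at h
      exact hpne (funext h)
    obtain ⟨i, hi⟩ := hex
    exact lt_of_lt_of_le (lt_of_le_of_ne (hp0 i) (Ne.symm hi)) (hmax i)
  set S := ∑ j, p j with hSdef
  have hS0 : 0 < S := by
    have : p i₀ ≤ S := Finset.single_le_sum (fun i _ => hp0 i) (Finset.mem_univ i₀)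
    linarith
  constructor
  · -- BSC
    set e := eBSC p with he
    have hmem : S / 2 ≤ maxSum p e := by
      have hne : {e : ℕ | (∑ i, p i) / 2 ≤ maxSum p e}.Nonempty := by
        refine ⟨n, ?_⟩
        have hSmem : S ∈ ((fun S : Finset (Fin n) => ∑ i ∈ S, p i) '' {S | S.card = n}) :=
          ⟨Finset.univ, by simp, rfl⟩
        have : S ≤ maxSum p n :=
          le_csSup (Set.Finite.bddAbove (Set.toFinite _)) hSmem
        simp only [Set.mem_setOf_eq]
        rw [← hSdef]
        linarith
      have := Nat.sInf_mem hne
      simpa [eBSC, ← hSdef, he] using this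
    have hub : maxSum p e ≤ (e : ℝ) * p i₀ := by
      refine Real.sSup_le ?_ (by positivity)
      rintro x ⟨A, hA, rfl⟩
      simp only [Set.mem_setOf_eq] at hA
      calc ∑ i ∈ A, p i ≤ ∑ i ∈ A, p i₀ := Finset.sum_le_sum (fun i _ => hmax i)
        _ = (A.card : ℝ) * p i₀ := by rw [Finset.sum_const, nsmul_eq_mul]
        _ = (e : ℝ) * p i₀ := by rw [hA]
    rw [wBSC]
    by_cases hcase : maxSum p (eBSC p) = (∑ i, p i) / 2
    · rw [if_pos hcase]
      -- T * p i₀ ≤ S = 2 * (S/2) ≤ 2 * e * p i₀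
      have h1 : (T:ℝ) * p i₀ ≤ 2 * (e:ℝ) * p i₀ := by
        have : S / 2 ≤ (e:ℝ) * p i₀ := le_trans hmem hub
        linarith
      have := le_of_mul_le_mul_right (by linarith [h1] : (T:ℝ) * p i₀ ≤ (2 * (e:ℝ)) * p i₀) hpos
      simpa [he] using this
    · rw [if_neg hcase]
      have hstrict : S / 2 < maxSum p e := by
        rcases lt_or_eq_of_le hmem with h | h
        · exact h
        · exact absurd (by rw [← hSdef]; exact h.symm) hcase
      have h1 : (T:ℝ) * p i₀ < 2 * (e:ℝ) * p i₀ := by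
        have : S / 2 < (e:ℝ) * p i₀ := lt_of_lt_of_le hstrict hub
        linarith
      have h2 : (T:ℝ) < 2 * (e:ℝ) := lt_of_mul_lt_mul_right (by linarith [h1]) (le_of_lt hpos)
      have h3 : T < 2 * e := by
        have : (T:ℝ) < ((2*e : ℕ) : ℝ) := by push_cast; linarith
        exact_mod_cast this
      have h4 : T + 1 ≤ 2 * e := h3
      have h5 : ((T + 1 : ℕ):ℝ) ≤ ((2*e : ℕ):ℝ) := by exact_mod_cast h4
      push_cast at h5
      linarith
  · -- AWGN
    rw [wAWGN]
    set Q := ∑ i, (p i)^2 with hQ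
    have hQ0 : 0 < Q := by
      have hex : ∃ i, p i ≠ 0 := by
        by_contra h
        push_neg at h
        exact hpne (funext h)
      obtain ⟨i, hi⟩ := hex
      have : 0 < (p i)^2 := by positivity
      have hle : (p i)^2 ≤ Q := Finset.single_le_sum (fun j _ => sq_nonneg (p j)) (Finset.mem_univ i)
      linarith
    rw [le_div_iff₀ hQ0]
    have hQle : Q ≤ p i₀ * S := by
      rw [hQ, hSdef, Finset.mul_sum]
      refine Finset.sum_le_sum (fun i _ => ?_)
      have := hmax i
      have := hp0 i
      nlinarith
    have hT0 : (0:ℝ) ≤ (T:ℝ) := Nat.cast_nonneg T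
    calc (T:ℝ) * Q ≤ (T:ℝ) * (p i₀ * S) := by nlinarith
      _ = ((T:ℝ) * p i₀) * S := by ring
      _ ≤ S * S := by nlinarith
      _ = S ^ 2 := by ring

lemma no_short {n m : ℕ} {G : TannerGraph n m} {g : ℕ}
    (hgirth : G.graph.girth = (g : ℕ∞)) (L : ℕ) (hL : g = 0 ∨ L < g) :
    ¬ (G.graph.egirth ≤ (L : ℕ∞)) := by
  have hg : G.graph.girth = g := by exact_mod_cast hgirth
  intro hle
  rcases hL with h0 | hlt
  · rw [h0] at hg
    have hac : G.graph.IsAcyclic := SimpleGraph.girth_eq_zero.mp hg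
    have : G.graph.egirth = ⊤ := SimpleGraph.egirth_eq_top.mpr hac
    rw [this] at hle
    exact absurd (top_le_iff.mp hle) (by simp)
  · have hgne : g ≠ 0 := by omega
    have hnac : ¬ G.graph.IsAcyclic := fun h => hgne (hg ▸ h.girth_eq_zero ▸ rfl)
    have hetop : G.graph.egirth ≠ ⊤ := fun h => hnac (SimpleGraph.egirth_eq_top.mp h)
    have : G.graph.egirth = (g : ℕ∞) := by
      rw [← hg]
      exact (ENat.coe_toNat hetop).symm
    rw [this] at hle
    have : g ≤ L := by exact_mod_cast hle
    omega

end TreeBound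


open TreeBound

theorem tree_bound_gen {n m : ℕ} (G : TannerGraph n m) (g d k ek : ℕ)
    (hd : 2 ≤ d) (hdeg : ∀ i : Fin n, d ≤ G.varDeg i)
    (hreg : ∀ j : Fin m, (G.N j).card = k)
    (hek2 : 2 ≤ ek) (hekk : ek ≤ k)
    (hgirth : G.graph.girth = (g : ℕ∞))
    (p : Fin n → ℝ) (hp0 : ∀ i, 0 ≤ p i) (hpne : p ≠ 0)
    (hcone : ∀ j : Fin m, ∀ i ∈ G.N j, (ek : ℝ) * p i ≤ ∑ l ∈ G.N j, p l) :
    (g % 4 = 2 →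
      1 + ∑ i ∈ Finset.range ((g - 2) / 4),
            (d : ℝ) * ((d : ℝ) - 1) ^ i * ((ek : ℝ) - 1) ^ (i + 1) ≤ wBSC p ∧
      1 + ∑ i ∈ Finset.range ((g - 2) / 4),
            (d : ℝ) * ((d : ℝ) - 1) ^ i * ((ek : ℝ) - 1) ^ (i + 1) ≤ wAWGN p) ∧
    (g % 4 = 0 →
      1 + (∑ i ∈ Finset.range ((g - 4) / 4),
            (d : ℝ) * ((d : ℝ) - 1) ^ i * ((ek : ℝ) - 1) ^ (i + 1))
          + ((d : ℝ) - 1) ^ ((g - 4) / 4) * ((ek : ℝ) - 1) ^ (g / 4) ≤ wBSC p ∧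
      1 + (∑ i ∈ Finset.range ((g - 4) / 4),
            (d : ℝ) * ((d : ℝ) - 1) ^ i * ((ek : ℝ) - 1) ^ (i + 1))
          + ((d : ℝ) - 1) ^ ((g - 4) / 4) * ((ek : ℝ) - 1) ^ (g / 4) ≤ wAWGN p) := by
  classical
  have hn : 0 < n := by
    rcases Nat.eq_zero_or_pos n with h | h
    · exfalso
      apply hpne
      funext i
      exfalso
      have := i.2
      omega
    · exact h
  obtain ⟨i₀, -, hmax0⟩ := Finset.exists_max_image Finset.univ p ⟨⟨0, hn⟩, Finset.mem_univ _⟩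
  have hmax : ∀ i, p i ≤ p i₀ := fun i => hmax0 i (Finset.mem_univ i)
  have hx1 : (1:ℝ) ≤ (ek:ℝ) - 1 := by
    have : (2:ℝ) ≤ (ek:ℝ) := by exact_mod_cast hek2
    linarith
  have hd1 : (1:ℝ) ≤ (d:ℝ) - 1 := by
    have : (2:ℝ) ≤ (d:ℝ) := by exact_mod_cast hd
    linarith
  have hp0i : 0 ≤ p i₀ := hp0 i₀
  -- a check adjacent to i₀
  have hj₀ex : ∃ j₀ : Fin m, i₀ ∈ G.N j₀ := by
    have h1 : 0 < G.varDeg i₀ := lt_of_lt_of_le (by omega) (hdeg i₀)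
    rw [TannerGraph.varDeg] at h1
    obtain ⟨j₀, hj₀⟩ := Finset.card_pos.mp h1
    exact ⟨j₀, (Finset.mem_filter.mp hj₀).2⟩
  obtain ⟨j₀, hj₀⟩ := hj₀ex
  constructor
  · -- g % 4 = 2
    intro hmod
    by_cases hg2 : g = 2
    · exfalso
      have hg : G.graph.girth = g := by exact_mod_cast hgirth
      have hnac : ¬ G.graph.IsAcyclic := by
        intro h
        have := h.girth_eq_zero
        omega
      have := SimpleGraph.three_le_girth hnac
      omega
    set t := (g - 2) / 4 with hT
    have hgt : g = 4*t + 2 := by omega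
    have hnc := no_short hgirth (4*t) (Or.inr (by omega))
    have htot := total_levels (G := G) (r := i₀) hp0 t hnc
    have hsum : (1 + ∑ i ∈ Finset.range t,
        (d : ℝ) * ((d : ℝ) - 1) ^ i * ((ek : ℝ) - 1) ^ (i + 1)) * p i₀ ≤ ∑ i, p i := by
      calc (1 + ∑ i ∈ Finset.range t,
            (d : ℝ) * ((d : ℝ) - 1) ^ i * ((ek : ℝ) - 1) ^ (i + 1)) * p i₀
          = p i₀ + ∑ i ∈ Finset.range t,
            ((d : ℝ) * ((d : ℝ) - 1) ^ i * ((ek : ℝ) - 1) ^ (i + 1)) * p i₀ := by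
            rw [add_mul, one_mul, Finset.sum_mul]
        _ ≤ (∑ l ∈ lev G i₀ 0, p (endvar i₀ l))
            + ∑ s ∈ Finset.range t, ∑ l ∈ lev G i₀ (s+1), p (endvar i₀ l) := by
            refine add_le_add (le_of_eq (LS_zero (G := G) (r := i₀) hp0 hcone hd hek2 hdeg).symm) ?_
            exact Finset.sum_le_sum (fun i _ => LS_ge hp0 hcone hd hek2 hdeg i)
        _ = ∑ s ∈ Finset.range (t+1), ∑ l ∈ lev G i₀ s, p (endvar i₀ l) := by
            rw [Finset.sum_range_succ']
            ring
        _ ≤ ∑ i, p i := htot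
    set Tn : ℕ := 1 + ∑ i ∈ Finset.range t, d * (d-1)^i * (ek-1)^(i+1) with hTn
    have hcast : (Tn : ℝ) = 1 + ∑ i ∈ Finset.range t,
        (d : ℝ) * ((d : ℝ) - 1) ^ i * ((ek : ℝ) - 1) ^ (i + 1) := by
      rw [hTn]
      push_cast [Nat.cast_sub (show 1 ≤ d by omega), Nat.cast_sub (show 1 ≤ ek by omega)]
      ring
    have hw := weights_ge p hp0 hpne i₀ hmax Tn (by rw [hcast]; exact hsum)
    exact ⟨hcast ▸ hw.1, hcast ▸ hw.2⟩
  · -- g % 4 = 0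
    intro hmod
    by_cases hg0 : g = 0
    · subst hg0
      -- bound is 2
      have hbnd : (1 : ℝ) + (∑ i ∈ Finset.range ((0 - 4) / 4),
            (d : ℝ) * ((d : ℝ) - 1) ^ i * ((ek : ℝ) - 1) ^ (i + 1))
          + ((d : ℝ) - 1) ^ ((0 - 4) / 4) * ((ek : ℝ) - 1) ^ (0 / 4) = 2 := by
        norm_num
      have hnc := no_short hgirth 2 (Or.inl rfl)
      have htot := total_levels_branch (G := G) (r := i₀) hp0 0 hj₀ (by exact_mod_cast hnc)
      have h1 : ∑ s ∈ Finset.range 1, ∑ l ∈ lev G i₀ s, p (endvar i₀ l) = p i₀ := by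
        rw [Finset.sum_range_one, LS_zero hp0 hcone hd hek2 hdeg]
      have h2 := BS_zero (G := G) (r := i₀) hp0 hcone hd hek2 hdeg hj₀
      have hsum : (2:ℝ) * p i₀ ≤ ∑ i, p i := by
        rw [h1] at htot
        nlinarith
      have hw := weights_ge p hp0 hpne i₀ hmax 2 (by exact_mod_cast hsum)
      rw [hbnd]
      exact ⟨by exact_mod_cast hw.1, by exact_mod_cast hw.2⟩
    · set t := (g - 4) / 4 with hT
      have hgt : g = 4*t + 4 := by omega
      have hgq : g / 4 = t + 1 := by omega
      have hnc := no_short hgirth (4*t+2) (Or.inr (by omega))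
      have htot := total_levels_branch (G := G) (r := i₀) hp0 t hj₀ hnc
      have hsum : (1 + (∑ i ∈ Finset.range t,
          (d : ℝ) * ((d : ℝ) - 1) ^ i * ((ek : ℝ) - 1) ^ (i + 1))
          + ((d : ℝ) - 1) ^ t * ((ek : ℝ) - 1) ^ (t + 1)) * p i₀ ≤ ∑ i, p i := by
        have hBS := BS_ge (G := G) (r := i₀) hp0 hcone hd hek2 hdeg hj₀ t
        calc (1 + (∑ i ∈ Finset.range t,
              (d : ℝ) * ((d : ℝ) - 1) ^ i * ((ek : ℝ) - 1) ^ (i + 1))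
              + ((d : ℝ) - 1) ^ t * ((ek : ℝ) - 1) ^ (t + 1)) * p i₀
            = (p i₀ + ∑ i ∈ Finset.range t,
              ((d : ℝ) * ((d : ℝ) - 1) ^ i * ((ek : ℝ) - 1) ^ (i + 1)) * p i₀)
              + ((d : ℝ) - 1) ^ t * ((ek : ℝ) - 1) ^ (t + 1) * p i₀ := by
              rw [add_mul, add_mul, one_mul, Finset.sum_mul]
          _ ≤ ((∑ l ∈ lev G i₀ 0, p (endvar i₀ l))
              + ∑ s ∈ Finset.range t, ∑ l ∈ lev G i₀ (s+1), p (endvar i₀ l))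
              + ∑ l ∈ levB G i₀ j₀ t, p (endvar i₀ l) := by
              refine add_le_add (add_le_add
                (le_of_eq (LS_zero (G := G) (r := i₀) hp0 hcone hd hek2 hdeg).symm)
                (Finset.sum_le_sum (fun i _ => LS_ge hp0 hcone hd hek2 hdeg i))) hBS
          _ = (∑ s ∈ Finset.range (t+1), ∑ l ∈ lev G i₀ s, p (endvar i₀ l))
              + ∑ l ∈ levB G i₀ j₀ t, p (endvar i₀ l) := by
              rw [Finset.sum_range_succ']
              ring
          _ ≤ ∑ i, p i := htot
      set Tn : ℕ := 1 + (∑ i ∈ Finset.range t, d * (d-1)^i * (ek-1)^(i+1))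
          + (d-1)^t * (ek-1)^(t+1) with hTn
      have hcast : (Tn : ℝ) = 1 + (∑ i ∈ Finset.range t,
          (d : ℝ) * ((d : ℝ) - 1) ^ i * ((ek : ℝ) - 1) ^ (i + 1))
          + ((d : ℝ) - 1) ^ t * ((ek : ℝ) - 1) ^ (t + 1) := by
        rw [hTn]
        push_cast [Nat.cast_sub (show 1 ≤ d by omega), Nat.cast_sub (show 1 ≤ ek by omega)]
        ring
      have hw := weights_ge p hp0 hpne i₀ hmax Tn (by rw [hcast]; exact hsum)
      rw [hgq]
      exact ⟨hcast ▸ hw.1, hcast ▸ hw.2⟩
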